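/- For every integer k ≥ 0, the series 1^k - 3^k + 5^k - 7^k + ⋯ is Abel summable with Abel sum (-1)^{⌊k/2⌋} · E_k / 2; that is, for 0 ≤ x < 1 the series Σ_{n≥0} (-1)^n (2n+1)^k x^n converges, and its limit as x → 1⁻ equals (-1)^{⌊k/2⌋} E_k / 2. -/

import Mathlib

open Filter Topology

namespace AbelAux

lemma summable_aux (k : ℕ) {r : ℝ} (hr : |r| < 1) :
    Summable (fun n : ℕ => (2 * (n : ℝ) + 1) ^ k * r ^ n) := by
  have hO : (fun n : ℕ => (((2 * n + 1) ^ k : ℕ) : ℝ)) =O[atTop]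
      (fun n : ℕ => ((n ^ k : ℕ) : ℝ)) := by
    rw [Asymptotics.isBigO_iff]
    refine ⟨3 ^ k, ?_⟩
    filter_upwards [eventually_ge_atTop 1] with n hn
    have h1 : (1 : ℝ) ≤ (n : ℝ) := by exact_mod_cast hn
    have h2 : ((2 * n + 1 : ℕ) : ℝ) ^ k ≤ (3 * (n : ℝ)) ^ k := by
      apply pow_le_pow_left₀ (by positivity)
      push_cast; linarith
    rw [Real.norm_eq_abs, Real.norm_eq_abs]
    push_cast
    rw [abs_of_nonneg (by positivity), abs_of_nonneg (by positivity)]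
    calc ((2:ℝ) * n + 1) ^ k ≤ (3 * (n:ℝ)) ^ k := by push_cast at h2 ⊢; exact h2
    _ = 3 ^ k * (n:ℝ) ^ k := by rw [mul_pow]
  have h := summable_norm_mul_geometric_of_norm_lt_one (r := r)
    (by simpa using hr) hO
  have h2 : Summable (fun n : ℕ => (((2 * n + 1) ^ k : ℕ) : ℝ) * r ^ n) := h.of_norm
  apply h2.congr
  intro n
  push_cast
  ring

noncomputable def g : ℝ → ℝ := fun s => (Real.cosh s)⁻¹

noncomputable def G : ℝ → ℝ := fun s => (1 / 2) * g s

lemma contDiff_g : ContDiff ℝ (⊤ : ℕ∞) g :=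
  Real.contDiff_cosh.inv fun s => (Real.cosh_pos s).ne'

lemma contDiff_G : ContDiff ℝ (⊤ : ℕ∞) G := contDiff_const.mul contDiff_g

lemma itd_G (k : ℕ) (s : ℝ) :
    iteratedDeriv k G s = (1 / 2) * iteratedDeriv k g s := by
  rw [← iteratedDerivWithin_univ, ← iteratedDerivWithin_univ]
  exact iteratedDerivWithin_const_mul (Set.mem_univ s) uniqueDiffOn_univ _
    (contDiff_g.contDiffAt.contDiffWithinAt.of_le (by exact_mod_cast le_top))

lemma exp_decomp (n : ℕ) (s : ℝ) :
    Real.exp (-(2 * (n : ℝ) + 1) * s) = Real.exp (-s) * Real.exp (-(2 * s)) ^ n := by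
  rw [← Real.exp_nat_mul, ← Real.exp_add]
  ring_nf

lemma key_base {s : ℝ} (hs : 0 < s) :
    HasSum (fun n : ℕ => (-1 : ℝ) ^ n * (2 * (n : ℝ) + 1) ^ 0 * Real.exp (-(2 * (n : ℝ) + 1) * s))
      ((-1 : ℝ) ^ 0 * iteratedDeriv 0 G s) := by
  have hlt : ‖-Real.exp (-(2 * s))‖ < 1 := by
    rw [norm_neg, Real.norm_eq_abs, abs_of_pos (Real.exp_pos _)]
    exact Real.exp_lt_one_iff.mpr (by linarith)
  have h0 := (hasSum_geometric_of_norm_lt_one hlt).mul_left (Real.exp (-s))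
  have e2 : Real.exp s * Real.exp (-s) = 1 := by rw [← Real.exp_add]; simp
  have e1 : Real.exp (-(2 * s)) = Real.exp (-s) * Real.exp (-s) := by
    rw [← Real.exp_add]; ring_nf
  convert h0 using 1
  · rfl
  · funext n
    rw [exp_decomp, neg_pow]
    ring
  · simp only [pow_zero, iteratedDeriv_zero, one_mul, G, g, Real.cosh_eq]
    rw [sub_neg_eq_add]
    have hne : Real.exp (-s) ≠ 0 := (Real.exp_pos _).ne'
    have hne2 : (1 : ℝ) + Real.exp (-(2*s)) ≠ 0 := by positivity
    have hne3 : Real.exp s + Real.exp (-s) ≠ 0 := by positivity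
    field_simp
    nlinarith [Real.exp_pos s, Real.exp_pos (-s)]

lemma key (k : ℕ) : ∀ {s : ℝ}, 0 < s →
    HasSum (fun n : ℕ => (-1 : ℝ) ^ n * (2 * (n : ℝ) + 1) ^ k * Real.exp (-(2 * (n : ℝ) + 1) * s))
      ((-1 : ℝ) ^ k * iteratedDeriv k G s) := by
  induction k with
  | zero => exact fun hs => key_base hs
  | succ k ih =>
    intro s hs
    set gf : ℕ → ℝ → ℝ := fun n y =>
      (-1 : ℝ) ^ n * (2 * (n : ℝ) + 1) ^ k * Real.exp (-(2 * (n : ℝ) + 1) * y) with hgf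
    set gf' : ℕ → ℝ → ℝ := fun n y =>
      (-1 : ℝ) ^ n * (2 * (n : ℝ) + 1) ^ k *
        (Real.exp (-(2 * (n : ℝ) + 1) * y) * (-(2 * (n : ℝ) + 1))) with hgf'
    set u : ℕ → ℝ := fun n =>
      (2 * (n : ℝ) + 1) ^ (k + 1) * Real.exp (-s) ^ n * Real.exp (-(s/2)) with hu
    have hexp : ∀ n : ℕ, ∀ y : ℝ, Real.exp (-(2 * (n:ℝ) + 1) * y)
        = Real.exp (-y) * Real.exp (-(2*y)) ^ n := fun n y => exp_decomp n y
    have husum : Summable u := by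
      have hr : |Real.exp (-s)| < 1 := by
        rw [abs_of_pos (Real.exp_pos _)]
        exact Real.exp_lt_one_iff.mpr (by linarith)
      exact (summable_aux (k+1) hr).mul_right _
    have hderiv : ∀ n : ℕ, ∀ y : ℝ, HasDerivAt (gf n) (gf' n y) y := by
      intro n y
      have h1 : HasDerivAt (fun y : ℝ => -(2 * (n:ℝ) + 1) * y) (-(2 * (n:ℝ) + 1)) y := by
        simpa using (hasDerivAt_id y).const_mul (-(2 * (n:ℝ) + 1))
      have h2 := (Real.hasDerivAt_exp (-(2 * (n:ℝ) + 1) * y)).comp y h1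
      exact h2.const_mul _
    have hbound : ∀ n : ℕ, ∀ y ∈ Set.Ioi (s/2), ‖gf' n y‖ ≤ u n := by
      intro n y hy
      have hy' : s/2 < y := hy
      have hpos : (0:ℝ) < 2 * (n:ℝ) + 1 := by positivity
      have hle : Real.exp (-(2 * (n:ℝ) + 1) * y) ≤ Real.exp (-(2 * (n:ℝ) + 1) * (s/2)) := by
        apply Real.exp_le_exp.mpr
        nlinarith
      have hdecomp : Real.exp (-(2 * (n:ℝ) + 1) * (s/2))
          = Real.exp (-s) ^ n * Real.exp (-(s/2)) := by
        rw [← Real.exp_nat_mul, ← Real.exp_add]; ring_nf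
      have habs : ‖gf' n y‖ = (2 * (n:ℝ) + 1) ^ (k+1) * Real.exp (-(2 * (n:ℝ) + 1) * y) := by
        rw [hgf']
        simp only [Real.norm_eq_abs, abs_mul, abs_pow, abs_neg, abs_one, one_pow, one_mul,
          abs_of_pos hpos, abs_of_pos (Real.exp_pos _)]
        rw [pow_succ]; ring
      rw [habs]
      calc (2 * (n:ℝ) + 1) ^ (k+1) * Real.exp (-(2 * (n:ℝ) + 1) * y)
          ≤ (2 * (n:ℝ) + 1) ^ (k+1) * Real.exp (-(2 * (n:ℝ) + 1) * (s/2)) :=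
            mul_le_mul_of_nonneg_left hle (by positivity)
        _ = u n := by rw [hu, hdecomp]; ring
    have hmem : s ∈ Set.Ioi (s/2) := by simp [Set.mem_Ioi]; linarith
    have hg0 : Summable fun n => gf n s := (ih hs).summable
    have HD : HasDerivAt (fun z => ∑' n, gf n z) (∑' n, gf' n s) s :=
      hasDerivAt_tsum_of_isPreconnected husum isOpen_Ioi (isPreconnected_Ioi)
        (fun n y _ => hderiv n y) hbound hmem hg0 hmem
    have hGdiff : HasDerivAt (iteratedDeriv k G) (iteratedDeriv (k+1) G s) s := by
      rw [iteratedDeriv_succ]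
      exact ((contDiff_G.differentiable_iteratedDeriv k
        (by exact_mod_cast lt_top_iff_ne_top.mpr (by simp))).differentiableAt).hasDerivAt
    have HD2 : HasDerivAt (fun z => (-1:ℝ)^k * iteratedDeriv k G z)
        ((-1:ℝ)^k * iteratedDeriv (k+1) G s) s := hGdiff.const_mul _
    have heq : (fun z => (-1:ℝ)^k * iteratedDeriv k G z) =ᶠ[𝓝 s] (fun z => ∑' n, gf n z) := by
      filter_upwards [Ioi_mem_nhds hs] with z hz
      exact ((ih hz).tsum_eq).symm
    have HD3 : HasDerivAt (fun z => ∑' n, gf n z) ((-1:ℝ)^k * iteratedDeriv (k+1) G s) s :=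
      HD2.congr_of_eventuallyEq heq.symm
    have huniq : ∑' n, gf' n s = (-1:ℝ)^k * iteratedDeriv (k+1) G s := HD.unique HD3
    have hr2 : |(-Real.exp (-(2*s)))| < 1 := by
      rw [abs_neg, abs_of_pos (Real.exp_pos _)]
      exact Real.exp_lt_one_iff.mpr (by linarith)
    have S : Summable (fun n : ℕ =>
        (-1:ℝ)^n * (2 * (n:ℝ) + 1)^(k+1) * Real.exp (-(2 * (n:ℝ) + 1) * s)) := by
      apply ((summable_aux (k+1) hr2).mul_right (Real.exp (-s))).congr
      intro n
      rw [hexp n s, neg_pow]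
      ring
    have hterm : ∀ n : ℕ, gf' n s
        = -((-1:ℝ)^n * (2 * (n:ℝ) + 1)^(k+1) * Real.exp (-(2 * (n:ℝ) + 1) * s)) := by
      intro n
      rw [hgf']
      simp only []
      rw [pow_succ]
      ring
    have hfun : (fun n : ℕ => gf' n s) = (fun n : ℕ =>
        -((-1:ℝ)^n * (2 * (n:ℝ) + 1)^(k+1) * Real.exp (-(2 * (n:ℝ) + 1) * s))) :=
      funext hterm
    rw [hfun, tsum_neg] at huniq
    have htsum : (∑' n : ℕ, (-1:ℝ)^n * (2 * (n:ℝ) + 1)^(k+1) * Real.exp (-(2 * (n:ℝ) + 1) * s))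
        = (-1:ℝ)^(k+1) * iteratedDeriv (k+1) G s := by
      rw [pow_succ]
      linarith
    rw [← htsum]
    exact S.hasSum

noncomputable def F : ℂ → ℂ := fun z => (Complex.cos z)⁻¹

lemma analytic_itd (k : ℕ) {z : ℂ} (hz : Complex.cos z ≠ 0) :
    AnalyticAt ℂ (iteratedDeriv k F) z := by
  have hU : IsOpen {w : ℂ | Complex.cos w ≠ 0} :=
    isOpen_compl_singleton.preimage Complex.continuous_cos
  have hF : DifferentiableOn ℂ F {w : ℂ | Complex.cos w ≠ 0} :=
    (Complex.differentiable_cos.differentiableOn).inv (fun w hw => hw)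
  have hFa : AnalyticOnNhd ℂ F {w : ℂ | Complex.cos w ≠ 0} := hF.analyticOnNhd hU
  have := hFa.iterated_deriv k
  rw [← iteratedDeriv_eq_iterate] at this
  exact this z hz

lemma hasDerivAt_itd (k : ℕ) {z : ℂ} (hz : Complex.cos z ≠ 0) :
    HasDerivAt (iteratedDeriv k F) (iteratedDeriv (k + 1) F z) z := by
  rw [iteratedDeriv_succ]
  exact (analytic_itd k hz).differentiableAt.hasDerivAt

lemma cos_mul_I_ne (s : ℝ) : Complex.cos ((s : ℂ) * Complex.I) ≠ 0 := by
  rw [Complex.cos_mul_I, ← Complex.ofReal_cosh]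
  exact_mod_cast (Real.cosh_pos s).ne'

lemma imag_itd (k : ℕ) : ∀ s : ℝ,
    iteratedDeriv k (fun s : ℝ => (F ((s : ℂ) * Complex.I)).re) s
      = (Complex.I ^ k * iteratedDeriv k F ((s : ℂ) * Complex.I)).re := by
  induction k with
  | zero => intro s; simp [iteratedDeriv_zero]
  | succ k ih =>
    intro s
    rw [iteratedDeriv_succ]
    have hfun : iteratedDeriv k (fun s : ℝ => (F ((s : ℂ) * Complex.I)).re)
        = fun s : ℝ => (Complex.I ^ k * iteratedDeriv k F ((s : ℂ) * Complex.I)).re :=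
      funext ih
    rw [hfun]
    have h2 : HasDerivAt (fun s : ℝ => (s : ℂ) * Complex.I) Complex.I s := by
      simpa using (Complex.ofRealCLM.hasDerivAt (x := s)).mul_const Complex.I
    have h3 : HasDerivAt (fun s : ℝ => iteratedDeriv k F ((s : ℂ) * Complex.I))
        (Complex.I • iteratedDeriv (k + 1) F ((s : ℂ) * Complex.I)) s :=
      (hasDerivAt_itd k (cos_mul_I_ne s)).scomp (g₁ := iteratedDeriv k F) s h2
    have h4 := h3.const_mul (Complex.I ^ k)
    have h5 : HasDerivAt
        (fun s : ℝ => (Complex.I ^ k * iteratedDeriv k F ((s : ℂ) * Complex.I)).re)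
        (Complex.reCLM (Complex.I ^ k *
          (Complex.I • iteratedDeriv (k + 1) F ((s : ℂ) * Complex.I)))) s :=
      Complex.reCLM.hasFDerivAt.comp_hasDerivAt s h4
    rw [h5.deriv]
    simp only [Complex.reCLM_apply, smul_eq_mul, pow_succ]
    ring_nf

lemma cos_real_ne {x : ℝ} (hx : x ∈ Set.Ioo (-1 : ℝ) 1) : Complex.cos (x : ℂ) ≠ 0 := by
  rw [← Complex.ofReal_cos]
  have : 0 < Real.cos x := by
    apply Real.cos_pos_of_mem_Ioo
    constructor
    · nlinarith [Real.pi_gt_three, hx.1]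
    · nlinarith [Real.pi_gt_three, hx.2]
  exact_mod_cast this.ne'

lemma real_itd (k : ℕ) : ∀ x ∈ Set.Ioo (-1 : ℝ) 1,
    iteratedDeriv k (fun x : ℝ => (F (x : ℂ)).re) x = (iteratedDeriv k F (x : ℂ)).re := by
  induction k with
  | zero => intro x _; simp [iteratedDeriv_zero]
  | succ k ih =>
    intro x hx
    rw [iteratedDeriv_succ]
    have hev : iteratedDeriv k (fun x : ℝ => (F (x : ℂ)).re)
        =ᶠ[𝓝 x] fun x : ℝ => (iteratedDeriv k F (x : ℂ)).re := by
      filter_upwards [isOpen_Ioo.mem_nhds hx] with y hy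
      exact ih y hy
    rw [hev.deriv_eq]
    have h3 : HasDerivAt (fun y : ℝ => iteratedDeriv k F (y : ℂ))
        (iteratedDeriv (k + 1) F (x : ℂ)) x :=
      (hasDerivAt_itd k (cos_real_ne hx)).comp_ofReal
    have h5 : HasDerivAt (fun y : ℝ => (iteratedDeriv k F (y : ℂ)).re)
        (Complex.reCLM (iteratedDeriv (k + 1) F (x : ℂ))) x :=
      Complex.reCLM.hasFDerivAt.comp_hasDerivAt x h3
    rw [h5.deriv]
    simp

lemma odd_vanish {f : ℝ → ℝ} (hf : ∀ x, f (-x) = f x) {k : ℕ} (hk : Odd k) :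
    iteratedDeriv k f 0 = 0 := by
  have h := iteratedDeriv_comp_neg k f 0
  rw [funext hf] at h
  rw [neg_zero, hk.neg_one_pow] at h
  have : iteratedDeriv k f 0 = -iteratedDeriv k f 0 := by
    simpa using h
  linarith

lemma g_eq : g = fun s : ℝ => (F ((s : ℂ) * Complex.I)).re := by
  funext s
  rw [g, F]
  simp only [Complex.cos_mul_I, ← Complex.ofReal_cosh, ← Complex.ofReal_inv, Complex.ofReal_re]

end AbelAux

/-- Euler numbers: `E n` is the `n`-th Taylor coefficient (times `n!`) of `1/cos` at `0`. -/
noncomputable def eulerNumber (n : ℕ) : ℝ :=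
  iteratedDeriv n (fun x : ℝ => (Real.cos x)⁻¹) 0

namespace AbelAux

lemma euler_eq (k : ℕ) : eulerNumber k = (iteratedDeriv k F 0).re := by
  have h1 : (fun x : ℝ => (Real.cos x)⁻¹) = fun x : ℝ => (F (x : ℂ)).re := by
    funext x
    rw [F]
    simp only [← Complex.ofReal_cos, ← Complex.ofReal_inv, Complex.ofReal_re]
  rw [eulerNumber, h1]
  have := real_itd k 0 (by norm_num)
  simpa using this

lemma value (k : ℕ) :
    (-1 : ℝ) ^ k * iteratedDeriv k G 0 = (-1 : ℝ) ^ (k / 2) * eulerNumber k / 2 := by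
  have hgF : iteratedDeriv k g 0 = (Complex.I ^ k * iteratedDeriv k F 0).re := by
    rw [g_eq]
    have := imag_itd k 0
    simpa using this
  rcases Nat.even_or_odd k with hk | hk
  · obtain ⟨m, rfl⟩ := hk
    have hI : Complex.I ^ (m + m) = (((-1 : ℝ) ^ m : ℝ) : ℂ) := by
      rw [← two_mul, pow_mul, Complex.I_sq]
      rw [Complex.ofReal_pow]
      norm_num
    have hdiv : (m + m) / 2 = m := by omega
    rw [itd_G, hgF, hI, hdiv, euler_eq, Complex.re_ofReal_mul]
    rw [Even.neg_one_pow ⟨m, rfl⟩]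
    ring
  · have h1 : iteratedDeriv k g 0 = 0 :=
      odd_vanish (fun x => by simp [g, Real.cosh_neg]) hk
    have h2 : eulerNumber k = 0 := by
      rw [eulerNumber]
      exact odd_vanish (fun x => by simp [Real.cos_neg]) hk
    rw [itd_G, h1, h2]
    ring

end AbelAux

theorem abel_sum_alternating_odd_powers (k : ℕ) :
    (∀ x : ℝ, 0 ≤ x → x < 1 →
      Summable (fun n : ℕ => (-1 : ℝ) ^ n * (2 * (n : ℝ) + 1) ^ k * x ^ n)) ∧
    Tendsto (fun x : ℝ => ∑' n : ℕ, (-1 : ℝ) ^ n * (2 * (n : ℝ) + 1) ^ k * x ^ n)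
      (𝓝[Set.Ico (0 : ℝ) 1] 1)
      (𝓝 ((-1 : ℝ) ^ (k / 2) * eulerNumber k / 2)) := by
  constructor
  · intro x hx0 hx1
    have hr : |(-x)| < 1 := by rwa [abs_neg, abs_of_nonneg hx0]
    apply (AbelAux.summable_aux k hr).congr
    intro n
    rw [neg_pow]
    ring
  · set Φ : ℝ → ℝ := fun t => Real.exp t * ((-1:ℝ)^k * iteratedDeriv k AbelAux.G t) with hΦ
    have hΦc : Continuous Φ :=
      Real.continuous_exp.mul (continuous_const.mul
        (AbelAux.contDiff_G.continuous_iteratedDeriv k (by exact_mod_cast le_top)))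
    have hlog : Tendsto (fun x : ℝ => -Real.log x / 2) (𝓝[Set.Ico (0:ℝ) 1] 1) (𝓝 0) := by
      have hc : ContinuousAt (fun x : ℝ => -Real.log x / 2) 1 :=
        ((Real.continuousAt_log one_ne_zero).neg).div_const 2
      have h := hc.tendsto
      simp only [Real.log_one, neg_zero, zero_div] at h
      exact h.mono_left nhdsWithin_le_nhds
    have hT : Tendsto (fun x : ℝ => Φ (-Real.log x / 2)) (𝓝[Set.Ico (0:ℝ) 1] 1) (𝓝 (Φ 0)) :=
      (hΦc.continuousAt.tendsto).comp hlog
    have hΦ0 : Φ 0 = (-1:ℝ)^(k/2) * eulerNumber k / 2 := by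
      rw [hΦ]
      simp only [Real.exp_zero, one_mul]
      exact AbelAux.value k
    rw [← hΦ0]
    apply hT.congr'
    have hev : ∀ᶠ x in 𝓝[Set.Ico (0:ℝ) 1] 1, x ∈ Set.Ioo (0:ℝ) 1 := by
      have h1 : ∀ᶠ x in 𝓝[Set.Ico (0:ℝ) 1] 1, x ∈ Set.Ioi (1/2 : ℝ) :=
        eventually_nhdsWithin_of_eventually_nhds (Ioi_mem_nhds (by norm_num))
      filter_upwards [h1, self_mem_nhdsWithin] with x hx1 hx2
      have : (1/2 : ℝ) < x := hx1
      exact ⟨by linarith, hx2.2⟩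
    filter_upwards [hev] with x hx
    set s : ℝ := -Real.log x / 2 with hsdef
    have hlogneg : Real.log x < 0 := Real.log_neg hx.1 hx.2
    have hs : 0 < s := by rw [hsdef]; linarith
    have hx_exp : Real.exp (-(2*s)) = x := by
      rw [hsdef]
      have h : -(2 * (-Real.log x / 2)) = Real.log x := by ring
      rw [h, Real.exp_log hx.1]
    have hsum := AbelAux.key k hs
    have hes : Real.exp s * Real.exp (-s) = 1 := by rw [← Real.exp_add]; simp
    have hterm : ∀ n : ℕ, Real.exp s *
        ((-1:ℝ)^n * (2*(n:ℝ)+1)^k * Real.exp (-(2*(n:ℝ)+1)*s))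
        = (-1:ℝ)^n * (2*(n:ℝ)+1)^k * x^n := by
      intro n
      rw [AbelAux.exp_decomp, hx_exp]
      calc Real.exp s * ((-1:ℝ)^n * (2*(n:ℝ)+1)^k * (Real.exp (-s) * x ^ n))
          = (Real.exp s * Real.exp (-s)) * ((-1:ℝ)^n * (2*(n:ℝ)+1)^k * x ^ n) := by ring
        _ = (-1:ℝ)^n * (2*(n:ℝ)+1)^k * x^n := by rw [hes]; ring
    have htsum : (∑' n : ℕ, (-1:ℝ)^n * (2*(n:ℝ)+1)^k * x^n)
        = Real.exp s * ((-1:ℝ)^k * iteratedDeriv k AbelAux.G s) := by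
      rw [← hsum.tsum_eq, ← tsum_mul_left]
      exact tsum_congr fun n => (hterm n).symm
    rw [htsum]
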